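/- Let S, T ∈ 𝔖 be nonempty. Then: (a) S ∼ (S∧T)U and T ∼ (S∧T)V where U and V are (+)-admissible sequences on (Γ,Λ^{S∧T}) that are unique up to ∼; (b) Supp U ∩ Supp V = ∅; (c) UV and VU are (+)-admissible sequences on (Γ,Λ^{S∧T}) and UV ∼ VU; (d) S∨T ∼ (S∧T)UV ∼ SV ∼ TU. -/

import Mathlib

namespace KP

/-! ## Quivers on a fixed vertex set `Fin n`.

An orientation is encoded by `Λ : Fin n → Fin n → ℕ`, where `Λ a b` is the number of
arrows from `a` to `b`.  The underlying graph is recorded by `edges Λ a b = Λ a b + Λ b a`. -/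

/-- The orientation `σ_x Λ` obtained by reversing every arrow incident with `x`. -/
def flipO {n : ℕ} (x : Fin n) (Λ : Fin n → Fin n → ℕ) : Fin n → Fin n → ℕ :=
  fun a b => if a = x ∨ b = x then Λ b a else Λ a b

/-- Number of edges of the underlying graph joining `a` and `b`. -/
def edges {n : ℕ} (Λ : Fin n → Fin n → ℕ) (a b : Fin n) : ℕ := Λ a b + Λ b a

/-- `x` is a sink: no arrow starts at `x`. -/
def IsSink {n : ℕ} (Λ : Fin n → Fin n → ℕ) (x : Fin n) : Prop := ∀ y, Λ x y = 0

/-- `S` is a `(+)`-admissible sequence of vertices on `(Γ, Λ)`. -/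
def Admissible {n : ℕ} (Λ : Fin n → Fin n → ℕ) : List (Fin n) → Prop
  | [] => True
  | x :: xs => IsSink Λ x ∧ Admissible (flipO x Λ) xs

/-- The orientation `Λ^S`. -/
def orientAfter {n : ℕ} (Λ : Fin n → Fin n → ℕ) : List (Fin n) → (Fin n → Fin n → ℕ)
  | [] => Λ
  | x :: xs => orientAfter (flipO x Λ) xs

/-- Elementary move: interchange two consecutive vertices not joined by an edge. -/
inductive SwapRel {n : ℕ} (E : Fin n → Fin n → ℕ) : List (Fin n) → List (Fin n) → Prop
  | swap (l₁ l₂ : List (Fin n)) (a b : Fin n) (h : E a b = 0) :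
      SwapRel E (l₁ ++ a :: b :: l₂) (l₁ ++ b :: a :: l₂)

/-- The equivalence `∼` on sequences of vertices: reflexive–transitive closure of the
(symmetric) relation `SwapRel`. -/
def Sim {n : ℕ} (E : Fin n → Fin n → ℕ) : List (Fin n) → List (Fin n) → Prop :=
  Relation.ReflTransGen (SwapRel E)

/-- The preorder `S ⪯ T` : `T ∼ S ++ U` for some `(+)`-admissible sequence `U` on `(Γ, Λ^S)`. -/
def Preceq {n : ℕ} (Λ : Fin n → Fin n → ℕ) (S T : List (Fin n)) : Prop :=
  ∃ U, Admissible (orientAfter Λ S) U ∧ Sim (edges Λ) T (S ++ U)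

/-- Support of a sequence of vertices. -/
def suppOf {n : ℕ} (S : List (Fin n)) : Set (Fin n) := {v | v ∈ S}

/-- The partial order on vertices: `x ≤ y` iff there is a path from `x` to `y` in `(Γ, Λ)`. -/
def PathLE {n : ℕ} (Λ : Fin n → Fin n → ℕ) (x y : Fin n) : Prop :=
  Relation.ReflTransGen (fun a b => Λ a b ≠ 0) x y

/-- A filter (up-closed set) of the poset `(Γ₀, Λ)`. -/
def IsFilter {n : ℕ} (Λ : Fin n → Fin n → ℕ) (F : Set (Fin n)) : Prop :=
  ∀ x ∈ F, ∀ y, PathLE Λ x y → y ∈ F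

/-- The principal filter `⟨x⟩`. -/
def upSet {n : ℕ} (Λ : Fin n → Fin n → ℕ) (x : Fin n) : Set (Fin n) := {y | PathLE Λ x y}

/-- The hull `H_Λ(F)`: the smallest filter containing `F` and every vertex joined
by an edge to a vertex of `F`. -/
def hull {n : ℕ} (Λ : Fin n → Fin n → ℕ) (F : Set (Fin n)) : Set (Fin n) :=
  {y | ∃ x, (x ∈ F ∨ ∃ z ∈ F, edges Λ z x ≠ 0) ∧ PathLE Λ x y}

/-- `segs` is a canonical form of `S` (Proposition 2.1): `S ∼ S₁S₂⋯S_r`, each segment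
consists of distinct vertices, is nonempty, and `Supp S_i = Supp (S_i S_{i+1} ⋯ S_r)`. -/
def Segments {n : ℕ} (Λ : Fin n → Fin n → ℕ) (S : List (Fin n))
    (segs : List (List (Fin n))) : Prop :=
  Admissible Λ segs.flatten ∧ Sim (edges Λ) S segs.flatten ∧
  (∀ seg ∈ segs, seg ≠ [] ∧ seg.Nodup) ∧
  ∀ i, i < segs.length → suppOf (segs.getD i []) = suppOf ((segs.drop i).flatten)

/-- `J` is (a representative of) the join `S ∨ T` (Definition 2.4):  the canonical form of `J`
has `Supp R_i = Supp S_i ∪ Supp T_i` (out-of-range segments read as `∅`). -/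
def IsJoin {n : ℕ} (Λ : Fin n → Fin n → ℕ) (S T J : List (Fin n)) : Prop :=
  ∃ CS CT CJ, Segments Λ S CS ∧ Segments Λ T CT ∧ Segments Λ J CJ ∧
    ∀ i, suppOf (CJ.getD i []) = suppOf (CS.getD i []) ∪ suppOf (CT.getD i [])

/-- `M` is (a representative of) the meet `S ∧ T` (Definition 2.4). -/
def IsMeet {n : ℕ} (Λ : Fin n → Fin n → ℕ) (S T M : List (Fin n)) : Prop :=
  ∃ CS CT CM, Segments Λ S CS ∧ Segments Λ T CT ∧ Segments Λ M CM ∧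
    ∀ i, suppOf (CM.getD i []) = suppOf (CS.getD i []) ∩ suppOf (CT.getD i [])

/-- `S` is (equivalent to) the join `T₁ ∨ ⋯ ∨ T_l` of the list of sequences `Ts`. -/
def IsJoinList {n : ℕ} (Λ : Fin n → Fin n → ℕ) : List (List (Fin n)) → List (Fin n) → Prop
  | [], S => S = []
  | T :: Ts, S => ∃ J, IsJoinList Λ Ts J ∧ IsJoin Λ T J S

/-- The segments of a canonical form of a principal sequence `S_{r,x}` (Definition 3.1). -/
def PrincipalSegs {n : ℕ} (Λ : Fin n → Fin n → ℕ) (segs : List (List (Fin n)))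
    (r : ℕ) (x : Fin n) : Prop :=
  segs.length = r ∧ 0 < r ∧
  (∀ i, i + 1 < r → suppOf (segs.getD i []) = hull Λ (suppOf (segs.getD (i+1) []))) ∧
  suppOf (segs.getD (r-1) []) = upSet Λ x

/-- `S ∼ S_{r,x}`, the principal `(+)`-admissible sequence of size `r` with
`Supp S_r = ⟨x⟩`. -/
def IsPrincipalSeq {n : ℕ} (Λ : Fin n → Fin n → ℕ) (r : ℕ) (x : Fin n)
    (S : List (Fin n)) : Prop :=
  ∃ segs, Segments Λ S segs ∧ PrincipalSegs Λ segs r x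

/-- `S` is a principal `(+)`-admissible sequence. -/
def IsPrincipal {n : ℕ} (Λ : Fin n → Fin n → ℕ) (S : List (Fin n)) : Prop :=
  ∃ r x, IsPrincipalSeq Λ r x S


/-! ## Representations of `(Γ, Λ)` over a field `k`. -/

/-- A (finite-dimensional) representation of the quiver `(Γ, Λ)` over `k`:
the space at vertex `x` is `Fin (d x) → k`, and each arrow carries a linear map. -/
structure Rep (k : Type) [Field k] (n : ℕ) (Λ : Fin n → Fin n → ℕ) where
  d : Fin n → ℕ
  f : ∀ a b : Fin n, Fin (Λ a b) → ((Fin (d a) → k) →ₗ[k] (Fin (d b) → k))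

variable {k : Type} [Field k] {n : ℕ}

/-- A morphism of representations. -/
structure RepHom {Λ : Fin n → Fin n → ℕ} (M N : Rep k n Λ) where
  g : ∀ x, (Fin (M.d x) → k) →ₗ[k] (Fin (N.d x) → k)
  comm : ∀ a b i v, g b (M.f a b i v) = N.f a b i (g a v)

/-- Isomorphism of representations. -/
def RepIso {Λ : Fin n → Fin n → ℕ} (M N : Rep k n Λ) : Prop :=
  ∃ g : ∀ x, (Fin (M.d x) → k) ≃ₗ[k] (Fin (N.d x) → k),
    ∀ a b i v, g b (M.f a b i v) = N.f a b i (g a v)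

/-- The zero representation. -/
def IsZeroRep {Λ : Fin n → Fin n → ℕ} (M : Rep k n Λ) : Prop := ∀ x, M.d x = 0

/-- Cast between the standard spaces. -/
def castL (k : Type) [Field k] {m m' : ℕ} (h : m = m') : (Fin m → k) ≃ₗ[k] (Fin m' → k) :=
  LinearEquiv.funCongrLeft k k (finCongr h.symm)

/-- The splitting `(Fin (m + p) → k) ≃ₗ (Fin m → k) × (Fin p → k)`. -/
def splitL (k : Type) [Field k] (m p : ℕ) : (Fin (m + p) → k) ≃ₗ[k] (Fin m → k) × (Fin p → k) :=
  (LinearEquiv.funCongrLeft k k finSumFinEquiv).trans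
    (LinearEquiv.sumArrowLequivProdArrow _ _ k k)

/-- Direct sum of two representations. -/
def dSum {Λ : Fin n → Fin n → ℕ} (M N : Rep k n Λ) : Rep k n Λ where
  d x := M.d x + N.d x
  f a b i :=
    (splitL k (M.d b) (N.d b)).symm.toLinearMap ∘ₗ
      (LinearMap.prodMap (M.f a b i) (N.f a b i)) ∘ₗ (splitL k (M.d a) (N.d a)).toLinearMap

/-- The zero representation (as an object). -/
def zeroRep (k : Type) [Field k] (n : ℕ) (Λ : Fin n → Fin n → ℕ) : Rep k n Λ where
  d _ := 0
  f _ _ _ := 0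

/-- Direct sum of a list of representations. -/
def dSumList {Λ : Fin n → Fin n → ℕ} (L : List (Rep k n Λ)) : Rep k n Λ :=
  L.foldr dSum (zeroRep k n Λ)

/-- `M` is indecomposable. -/
def Indecomp {Λ : Fin n → Fin n → ℕ} (M : Rep k n Λ) : Prop :=
  ¬ IsZeroRep M ∧ ∀ A B : Rep k n Λ, RepIso M (dSum A B) → IsZeroRep A ∨ IsZeroRep B

/-- `X` is a direct summand of `M`. -/
def IsSummand {Λ : Fin n → Fin n → ℕ} (X M : Rep k n Λ) : Prop :=
  ∃ Y, RepIso M (dSum X Y)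

/-! ### Reflection functors (on objects) -/

/-- Index type of the arrows ending at `x`. -/
abbrev Arin {n : ℕ} (Λ : Fin n → Fin n → ℕ) (x : Fin n) := Σ y : Fin n, Fin (Λ y x)

/-- Index type of the arrows starting at `x`. -/
abbrev Aout {n : ℕ} (Λ : Fin n → Fin n → ℕ) (x : Fin n) := Σ y : Fin n, Fin (Λ x y)

/-- The map `h : ⊕_{a : y → x} V(y) → V(x)` induced by the maps along the arrows ending at `x`. -/
noncomputable def inMap (Λ : Fin n → Fin n → ℕ) (M : Rep k n Λ) (x : Fin n) :
    ((p : Arin Λ x) → (Fin (M.d p.1) → k)) →ₗ[k] (Fin (M.d x) → k) :=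
  ∑ p : Arin Λ x, (M.f p.1 x p.2) ∘ₗ LinearMap.proj p

/-- The map `h' : V(x) → ⊕_{a : x → y} V(y)` induced by the maps along arrows starting at `x`. -/
def outMap (Λ : Fin n → Fin n → ℕ) (M : Rep k n Λ) (x : Fin n) :
    (Fin (M.d x) → k) →ₗ[k] ((p : Aout Λ x) → (Fin (M.d p.1) → k)) :=
  LinearMap.pi fun p => M.f x p.1 p.2

noncomputable def kerEquiv (Λ : Fin n → Fin n → ℕ) (M : Rep k n Λ) (x : Fin n) :
    LinearMap.ker (inMap Λ M x) ≃ₗ[k]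
      (Fin (Module.finrank k (LinearMap.ker (inMap Λ M x))) → k) :=
  (Module.finBasis k _).equivFun

noncomputable def cokerEquiv (Λ : Fin n → Fin n → ℕ) (M : Rep k n Λ) (x : Fin n) :
    (((p : Aout Λ x) → (Fin (M.d p.1) → k)) ⧸ LinearMap.range (outMap Λ M x)) ≃ₗ[k]
      (Fin (Module.finrank k (((p : Aout Λ x) → (Fin (M.d p.1) → k)) ⧸
        LinearMap.range (outMap Λ M x))) → k) :=
  (Module.finBasis k _).equivFun

/-- The positive reflection functor `F_x⁺` (on objects): the space at `x` is replaced
by the kernel of `inMap`, with the maps along the reversed arrows induced by inclusion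
followed by the projections. -/
noncomputable def reflPlus (x : Fin n) (Λ : Fin n → Fin n → ℕ) (M : Rep k n Λ) :
    Rep k n (flipO x Λ) where
  d z := if z = x then Module.finrank k (LinearMap.ker (inMap Λ M x)) else M.d z
  f a b i :=
    if ha : a = x then
      if hb : b = x then 0
      else
        (castL k (if_neg hb).symm).toLinearMap ∘ₗ
          (LinearMap.proj (φ := fun p : Arin Λ x => Fin (M.d p.1) → k)
            (⟨b, Fin.cast (by subst ha; simp [flipO]) i⟩ : Arin Λ x)) ∘ₗ
          (LinearMap.ker (inMap Λ M x)).subtype ∘ₗ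
          (kerEquiv Λ M x).symm.toLinearMap ∘ₗ (castL k (if_pos ha)).toLinearMap
    else
      if hb : b = x then 0
      else
        (castL k (if_neg hb).symm).toLinearMap ∘ₗ
          M.f a b (Fin.cast (by simp [flipO, ha, hb]) i) ∘ₗ
          (castL k (if_neg ha)).toLinearMap

/-- The negative reflection functor `F_x⁻` (on objects), presented as a map from
representations of `(Γ, σ_x Λ)` to representations of `(Γ, Λ)`: the space at `x` is
replaced by the cokernel of `outMap`. -/
noncomputable def reflMinus (x : Fin n) (Λ : Fin n → Fin n → ℕ)
    (N : Rep k n (flipO x Λ)) : Rep k n Λ where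
  d z := if z = x then
      Module.finrank k (((p : Aout (flipO x Λ) x) → (Fin (N.d p.1) → k)) ⧸
        LinearMap.range (outMap (flipO x Λ) N x))
    else N.d z
  f a b i :=
    if hb : b = x then
      if ha : a = x then 0
      else
        (castL k (if_pos hb).symm).toLinearMap ∘ₗ
          (cokerEquiv (flipO x Λ) N x).toLinearMap ∘ₗ
          (LinearMap.range (outMap (flipO x Λ) N x)).mkQ ∘ₗ
          (LinearMap.single k (fun p : Aout (flipO x Λ) x => Fin (N.d p.1) → k)
            (⟨a, Fin.cast (by subst hb; simp [flipO]) i⟩ : Aout (flipO x Λ) x)) ∘ₗ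
          (castL k (if_neg ha)).toLinearMap
    else
      if ha : a = x then 0
      else
        (castL k (if_neg hb).symm).toLinearMap ∘ₗ
          N.f a b (Fin.cast (by simp [flipO, ha, hb]) i) ∘ₗ
          (castL k (if_neg ha)).toLinearMap

/-- `F(S) = F_{x_s}⁺ ⋯ F_{x_1}⁺` applied to a representation. -/
noncomputable def FList : (S : List (Fin n)) → (Λ : Fin n → Fin n → ℕ) → Rep k n Λ →
    Rep k n (orientAfter Λ S)
  | [], _, M => M
  | x :: xs, Λ, M => FList xs (flipO x Λ) (reflPlus x Λ M)

/-- `S` annihilates `M` : `F(S) M = 0`. -/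
def Annihilates (Λ : Fin n → Fin n → ℕ) (S : List (Fin n)) (M : Rep k n Λ) : Prop :=
  IsZeroRep (FList S Λ M)

/-- `M` is preprojective: some `(+)`-admissible sequence annihilates it. -/
def Preprojective (Λ : Fin n → Fin n → ℕ) (M : Rep k n Λ) : Prop :=
  ∃ S, Admissible Λ S ∧ Annihilates Λ S M

/-- `S` is a shortest `(+)`-admissible sequence annihilating `M` : it annihilates `M` and no
proper subsequence of `S` annihilates `M`.  (This predicate is invariant under `∼`, so it
expresses `S ∼ S_M`.) -/
def IsShortestAnn (Λ : Fin n → Fin n → ℕ) (M : Rep k n Λ) (S : List (Fin n)) : Prop :=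
  Admissible Λ S ∧ Annihilates Λ S M ∧
  ∀ S', Admissible Λ S' → Annihilates Λ S' M → Preceq Λ S' S → Sim (edges Λ) S' S

/-- The simple representation `L_x` concentrated at the vertex `x`. -/
def simpleRep (Λ : Fin n → Fin n → ℕ) (x : Fin n) : Rep k n Λ where
  d z := if z = x then 1 else 0
  f _ _ _ := 0

/-- `M(S) = F_{x₁}⁻ F_{x₂}⁻ ⋯ F_{x_{s-1}}⁻ (L_{x_s})`, where `L_{x_s}` is the simple
(projective) module over `k(Γ, σ_{x_{s-1}} ⋯ σ_{x_1} Λ)` at the vertex `x_s`. -/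
noncomputable def Mof : (Λ : Fin n → Fin n → ℕ) → (S : List (Fin n)) → Rep k n Λ
  | Λ, [] => zeroRep k n Λ
  | Λ, [x] => simpleRep Λ x
  | Λ, x :: y :: ys => reflMinus x Λ (Mof (flipO x Λ) (y :: ys))

variable {n : ℕ}

/-! ## The Weyl group -/

/-- The simple reflection `σ_i` attached to a generalized Cartan matrix `A`,
as a linear endomorphism of `ℤⁿ` : `σ_i(v) = v - (∑ l, a_{il} v_l) e_i`. -/
def sigmaL (A : Fin n → Fin n → ℤ) (i : Fin n) : (Fin n → ℤ) →ₗ[ℤ] (Fin n → ℤ) where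
  toFun v := v - (∑ l, A i l * v l) • Pi.single i 1
  map_add' v w := by
    simp only [Pi.add_apply, mul_add, Finset.sum_add_distrib, add_smul]
    abel
  map_smul' c v := by
    simp only [Pi.smul_apply, smul_eq_mul, RingHom.id_apply, smul_sub]
    congr 1
    rw [smul_smul, Finset.mul_sum]
    congr 1
    exact Finset.sum_congr rfl fun l _ => by ring

theorem sigma_invol (A : Fin n → Fin n → ℤ) (hA : ∀ i, A i i = 2) (i : Fin n) :
    (sigmaL A i).comp (sigmaL A i) = LinearMap.id := by
  apply LinearMap.ext
  intro v
  simp only [LinearMap.comp_apply, LinearMap.id_apply, sigmaL, LinearMap.coe_mk, AddHom.coe_mk]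
  set c := ∑ l, A i l * v l with hc
  set s : Fin n → ℤ := Pi.single i 1 with hs
  have h1 : ∑ l, A i l * (v - c • s) l = -c := by
    have h2 : ∀ l, A i l * (v - c • s) l = A i l * v l - c * (A i l * s l) := fun l => by
      simp only [Pi.sub_apply, Pi.smul_apply, smul_eq_mul]
      ring
    rw [Finset.sum_congr rfl fun l _ => h2 l, Finset.sum_sub_distrib, ← Finset.mul_sum]
    have h3 : ∑ l, A i l * s l = 2 := by
      rw [Finset.sum_eq_single i]
      · simp [hs, hA i]
      · intro b _ hb
        simp [hs, Pi.single_eq_of_ne hb]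
      · simp
    rw [h3, ← hc]
    ring
  rw [h1]
  ext j
  simp only [Pi.sub_apply, Pi.smul_apply, smul_eq_mul]
  ring

/-- The simple reflection `σ_i` as an automorphism of `ℤⁿ`. -/
def sigmaE (A : Fin n → Fin n → ℤ) (hA : ∀ i, A i i = 2) (i : Fin n) :
    (Fin n → ℤ) ≃ₗ[ℤ] (Fin n → ℤ) :=
  LinearEquiv.ofLinear (sigmaL A i) (sigmaL A i) (sigma_invol A hA i) (sigma_invol A hA i)

/-- The length `ℓ(w)`: the least `l ≥ 0` such that `w` is a product of `l` simple
reflections. -/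
noncomputable def wordLen (A : Fin n → Fin n → ℤ) (hA : ∀ i, A i i = 2)
    (w : (Fin n → ℤ) ≃ₗ[ℤ] (Fin n → ℤ)) : ℕ :=
  sInf {l | ∃ ys : List (Fin n), ys.length = l ∧ w = (ys.map (sigmaE A hA)).prod}

/-- The word `w(S) = σ_{x_s} ⋯ σ_{x_1}` associated to a sequence `S = x₁, …, x_s`. -/
def wordOf (A : Fin n → Fin n → ℤ) (hA : ∀ i, A i i = 2) (S : List (Fin n)) :
    (Fin n → ℤ) ≃ₗ[ℤ] (Fin n → ℤ) :=
  ((S.reverse).map (sigmaE A hA)).prod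

/-- The symmetric generalized Cartan matrix of the underlying graph of `(Γ, Λ)`. -/
def cartanOf (Λ : Fin n → Fin n → ℕ) : Fin n → Fin n → ℤ :=
  fun i j => if i = j then 2 else -(edges Λ i j : ℤ)

theorem cartan_diag (Λ : Fin n → Fin n → ℕ) : ∀ i, cartanOf Λ i i = 2 := by
  intro i; simp [cartanOf]

/-- The simple reflections of the Weyl group of the underlying graph of `(Γ, Λ)`. -/
def wSig (Λ : Fin n → Fin n → ℕ) : Fin n → ((Fin n → ℤ) ≃ₗ[ℤ] (Fin n → ℤ)) :=
  sigmaE (cartanOf Λ) (cartan_diag Λ)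

/-- `w(S)` for a sequence of vertices of `(Γ, Λ)`. -/
def wordOfSeq (Λ : Fin n → Fin n → ℕ) (S : List (Fin n)) :
    (Fin n → ℤ) ≃ₗ[ℤ] (Fin n → ℤ) :=
  ((S.reverse).map (wSig Λ)).prod

/-- The word `w(S)` is reduced: `ℓ(w(S))` equals the number of letters of `S`. -/
noncomputable def IsReducedSeq (Λ : Fin n → Fin n → ℕ) (S : List (Fin n)) : Prop :=
  wordLen (cartanOf Λ) (cartan_diag Λ) (wordOfSeq Λ S) = S.length

/-! ## Dynkin graphs of types A, D, E -/

def edgeA (n : ℕ) : Fin n → Fin n → ℕ := fun i j =>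
  if (i : ℕ) + 1 = (j : ℕ) ∨ (j : ℕ) + 1 = (i : ℕ) then 1 else 0

def edgeD (n : ℕ) : Fin n → Fin n → ℕ := fun i j =>
  if ((i : ℕ) = 0 ∧ (j : ℕ) = 2) ∨ ((j : ℕ) = 0 ∧ (i : ℕ) = 2) ∨
     ((i : ℕ) = 1 ∧ (j : ℕ) = 2) ∨ ((j : ℕ) = 1 ∧ (i : ℕ) = 2) ∨
     (2 ≤ (i : ℕ) ∧ (i : ℕ) + 1 = (j : ℕ)) ∨ (2 ≤ (j : ℕ) ∧ (j : ℕ) + 1 = (i : ℕ))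
  then 1 else 0

def edgeE (n : ℕ) : Fin n → Fin n → ℕ := fun i j =>
  if ((i : ℕ) + 1 = (j : ℕ) ∧ (j : ℕ) ≤ n - 2) ∨ ((j : ℕ) + 1 = (i : ℕ) ∧ (i : ℕ) ≤ n - 2) ∨
     ((i : ℕ) = 2 ∧ (j : ℕ) = n - 1) ∨ ((j : ℕ) = 2 ∧ (i : ℕ) = n - 1)
  then 1 else 0

/-- The underlying graph (given by its edge-count function `E`) is a Dynkin diagram of
type `A`, `D`, or `E`. -/
def IsDynkinADE (n : ℕ) (E : Fin n → Fin n → ℕ) : Prop :=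
  ∃ e : Fin n ≃ Fin n,
    (∀ i j, E i j = edgeA n (e i) (e j)) ∨
    (4 ≤ n ∧ ∀ i j, E i j = edgeD n (e i) (e j)) ∨
    ((n = 6 ∨ n = 7 ∨ n = 8) ∧ ∀ i j, E i j = edgeE n (e i) (e j))

/-! ## Coxeter-sortable elements -/

/-- Lexicographic comparison of index tuples. -/
def lexLE {s : ℕ} (ι ι' : Fin s → ℕ) : Prop :=
  ι = ι' ∨ ∃ j, (∀ j', j' < j → ι j' = ι' j') ∧ ι j < ι' j

/-- `w` is `c`-sortable for the Coxeter element determined by the half-infinite word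
`cseq` (with dividers every `blockLen` letters): the lexicographically first subsequence
of `cseq` that is a reduced word for `w` defines a sequence of subsets (between adjacent
dividers) that is decreasing under inclusion. -/
def CSortable (A : Fin n → Fin n → ℤ) (hA : ∀ i, A i i = 2) (cseq : ℕ → Fin n)
    (blockLen : ℕ) (w : (Fin n → ℤ) ≃ₗ[ℤ] (Fin n → ℤ)) : Prop :=
  ∃ (s : ℕ) (ι : Fin s → ℕ), StrictMono ι ∧
    w = ((List.ofFn fun j => cseq (ι j)).map (sigmaE A hA)).prod ∧
    wordLen A hA w = s ∧
    (∀ ι' : Fin s → ℕ, StrictMono ι' →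
      w = ((List.ofFn fun j => cseq (ι' j)).map (sigmaE A hA)).prod → lexLE ι ι') ∧
    ∀ m : ℕ, {a : Fin n | ∃ j, (ι j) / blockLen = m + 1 ∧ cseq (ι j) = a} ⊆
             {a : Fin n | ∃ j, (ι j) / blockLen = m ∧ cseq (ι j) = a}


/-- A nonzero non-isomorphism between representations. -/
def RepStep {k : Type} [Field k] {n : ℕ} {Λ : Fin n → Fin n → ℕ} (X Y : Rep k n Λ) : Prop :=
  ∃ f : RepHom X Y, (∃ x v, f.g x v ≠ 0) ∧ ¬ ∀ x, Function.Bijective (f.g x)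

/-- `v` is a minimal element of `D` in the poset `(Γ₀, Λ)`. -/
def MinimalIn {n : ℕ} (Λ : Fin n → Fin n → ℕ) (D : Set (Fin n)) (v : Fin n) : Prop :=
  v ∈ D ∧ ∀ u ∈ D, PathLE Λ u v → u = v

/-- The pairs `(h, v)` of Proposition 3.2(a): `0 < h ≤ r` and `v` a minimal element of
`Supp S_h \ H_Λ(Supp S_{h+1})` (with `Supp S_{r+1} = ∅`). -/
def JoinPair {n : ℕ} (Λ : Fin n → Fin n → ℕ) (segs : List (List (Fin n)))
    (p : ℕ × Fin n) : Prop :=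
  0 < p.1 ∧ p.1 ≤ segs.length ∧
  MinimalIn Λ (suppOf (segs.getD (p.1 - 1) []) \ hull Λ (suppOf (segs.getD p.1 []))) p.2

/-! ## Auxiliary lemmas for the meet–join theorem -/

section MeetJoinAux

variable {n : ℕ}

theorem edges_symm (Λ : Fin n → Fin n → ℕ) (a b : Fin n) : edges Λ a b = edges Λ b a :=
  Nat.add_comm _ _

theorem edges_flipO (x : Fin n) (Λ : Fin n → Fin n → ℕ) : edges (flipO x Λ) = edges Λ := by
  funext a b
  simp only [edges, flipO]
  by_cases ha : a = x <;> by_cases hb : b = x <;> simp [ha, hb] <;> omega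

theorem edges_orientAfter : ∀ (P : List (Fin n)) (Λ : Fin n → Fin n → ℕ),
    edges (orientAfter Λ P) = edges Λ
  | [], _ => rfl
  | x :: P, Λ => by
    simp only [orientAfter]
    rw [edges_orientAfter P (flipO x Λ), edges_flipO]

theorem flipO_comm (x y : Fin n) (Λ : Fin n → Fin n → ℕ) :
    flipO x (flipO y Λ) = flipO y (flipO x Λ) := by
  funext a b
  simp only [flipO]
  by_cases hax : a = x <;> by_cases hbx : b = x <;> by_cases hay : a = y <;>
    by_cases hby : b = y <;> simp_all

theorem simTrans {E : Fin n → Fin n → ℕ} {u v w : List (Fin n)}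
    (h1 : Sim E u v) (h2 : Sim E v w) : Sim E u w :=
  Relation.ReflTransGen.trans h1 h2

theorem simRefl {E : Fin n → Fin n → ℕ} (l : List (Fin n)) : Sim E l l :=
  Relation.ReflTransGen.refl

theorem swapRel_symm {E : Fin n → Fin n → ℕ} (hsym : ∀ a b, E a b = E b a)
    {u v : List (Fin n)} (h : SwapRel E u v) : SwapRel E v u := by
  rcases h with ⟨l₁, l₂, a, b, hab⟩
  exact SwapRel.swap l₁ l₂ b a (by rw [hsym]; exact hab)

theorem simSymm {E : Fin n → Fin n → ℕ} (hsym : ∀ a b, E a b = E b a)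
    {u v : List (Fin n)} (h : Sim E u v) : Sim E v u := by
  induction h with
  | refl => exact Relation.ReflTransGen.refl
  | tail _ h₂ ih => exact Relation.ReflTransGen.head (swapRel_symm hsym h₂) ih

theorem sim_append_left {E : Fin n → Fin n → ℕ} (p : List (Fin n)) {u v : List (Fin n)}
    (h : Sim E u v) : Sim E (p ++ u) (p ++ v) := by
  refine Relation.ReflTransGen.lift (fun l => p ++ l) ?_ _ _ h
  intro a b hab
  rcases hab with ⟨l₁, l₂, c, d, hcd⟩
  have := SwapRel.swap (E := E) (p ++ l₁) l₂ c d hcd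
  simpa [List.append_assoc] using this

theorem sim_append_right {E : Fin n → Fin n → ℕ} (q : List (Fin n)) {u v : List (Fin n)}
    (h : Sim E u v) : Sim E (u ++ q) (v ++ q) := by
  refine Relation.ReflTransGen.lift (fun l => l ++ q) ?_ _ _ h
  intro a b hab
  rcases hab with ⟨l₁, l₂, c, d, hcd⟩
  have := SwapRel.swap (E := E) l₁ (l₂ ++ q) c d hcd
  simpa [List.append_assoc, Function.onFun] using this

theorem sim_cons {E : Fin n → Fin n → ℕ} (c : Fin n) {u v : List (Fin n)}
    (h : Sim E u v) : Sim E (c :: u) (c :: v) :=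
  sim_append_left [c] h

theorem sim_perm {E : Fin n → Fin n → ℕ} {u v : List (Fin n)} (h : Sim E u v) : u.Perm v := by
  induction h with
  | refl => exact List.Perm.refl _
  | tail _ h₂ ih =>
    refine ih.trans ?_
    rcases h₂ with ⟨l₁, l₂, a, b, _⟩
    exact List.Perm.append_left l₁ (List.Perm.swap b a l₂)

theorem sim_count {E : Fin n → Fin n → ℕ} {u v : List (Fin n)} (h : Sim E u v) (c : Fin n) :
    u.count c = v.count c :=
  (sim_perm h).count_eq c

theorem orientAfter_perm {u v : List (Fin n)} (h : u.Perm v) :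
    ∀ Λ : Fin n → Fin n → ℕ, orientAfter Λ u = orientAfter Λ v := by
  induction h with
  | nil => intro Λ; rfl
  | cons x _ ih => intro Λ; simp only [orientAfter]; exact ih _
  | swap x y l => intro Λ; simp only [orientAfter]; rw [flipO_comm]
  | trans _ _ ih₁ ih₂ => intro Λ; rw [ih₁, ih₂]

theorem orientAfter_sim {E : Fin n → Fin n → ℕ} {u v : List (Fin n)} (h : Sim E u v)
    (Λ : Fin n → Fin n → ℕ) : orientAfter Λ u = orientAfter Λ v :=
  orientAfter_perm (sim_perm h) Λ

theorem adm_append : ∀ (p : List (Fin n)) (Λ : Fin n → Fin n → ℕ) (q : List (Fin n)),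
    Admissible Λ (p ++ q) ↔ (Admissible Λ p ∧ Admissible (orientAfter Λ p) q)
  | [], Λ, q => by simp [Admissible, orientAfter]
  | x :: p, Λ, q => by
    constructor
    · rintro ⟨hx, h⟩
      have h' := (adm_append p (flipO x Λ) q).mp h
      exact ⟨⟨hx, h'.1⟩, h'.2⟩
    · rintro ⟨⟨hx, h1⟩, h2⟩
      exact ⟨hx, (adm_append p (flipO x Λ) q).mpr ⟨h1, h2⟩⟩

theorem adm_swap_core {Λ : Fin n → Fin n → ℕ} {a b : Fin n} (hab : edges Λ a b = 0)
    {l : List (Fin n)} (h : Admissible Λ (a :: b :: l)) : Admissible Λ (b :: a :: l) := by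
  by_cases heq : a = b
  · subst heq; exact h
  obtain ⟨ha, hb, hl⟩ : IsSink Λ a ∧ IsSink (flipO a Λ) b ∧ Admissible (flipO b (flipO a Λ)) l := by
    simpa [Admissible, and_assoc] using h
  have hab1 : Λ a b = 0 := by simp only [edges] at hab; omega
  have hab2 : Λ b a = 0 := by simp only [edges] at hab; omega
  have hba : ¬ b = a := fun h' => heq h'.symm
  refine ⟨?_, ?_, ?_⟩
  · intro y
    by_cases hy : y = a
    · subst hy; exact hab2
    · have := hb y
      simpa [flipO, hba, hy] using this
  · intro y
    by_cases hy : y = b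
    · subst hy; simp [flipO, hab2]
    · have : ¬ (a = b ∨ y = b) := by tauto
      simpa [flipO, this] using ha y
  · rw [flipO_comm]; exact hl

theorem adm_swapRel : ∀ (l₁ : List (Fin n)) (Λ : Fin n → Fin n → ℕ) {a b : Fin n}
    {l₂ : List (Fin n)}, edges Λ a b = 0 →
    Admissible Λ (l₁ ++ a :: b :: l₂) → Admissible Λ (l₁ ++ b :: a :: l₂)
  | [], _, _, _, _, h, hadm => adm_swap_core h hadm
  | c :: l₁, Λ, a, b, l₂, h, hadm => by
    obtain ⟨hc, hrest⟩ := hadm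
    exact ⟨hc, adm_swapRel l₁ (flipO c Λ) (by rw [edges_flipO]; exact h) hrest⟩

theorem adm_sim {Λ : Fin n → Fin n → ℕ} {u v : List (Fin n)} (h : Sim (edges Λ) u v)
    (hu : Admissible Λ u) : Admissible Λ v := by
  induction h with
  | refl => exact hu
  | tail _ h₂ ih =>
    rcases h₂ with ⟨l₁, l₂, a, b, hab⟩
    exact adm_swapRel l₁ Λ hab ih

theorem first_split {x : Fin n} {l : List (Fin n)} (hx : x ∈ l) :
    ∃ A B, l = A ++ x :: B ∧ x ∉ A := by
  induction l with
  | nil => simp at hx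
  | cons c l ih =>
    by_cases hc : x = c
    · exact ⟨[], l, by simp [hc], by simp⟩
    · rcases List.mem_cons.mp hx with h | h
      · exact absurd h hc
      · obtain ⟨A, B, rfl, hA⟩ := ih h
        exact ⟨c :: A, B, rfl, by simp [hc, hA]⟩

theorem bubble {E : Fin n → Fin n → ℕ} {x : Fin n} :
    ∀ (A B : List (Fin n)), (∀ a ∈ A, E a x = 0) → Sim E (A ++ x :: B) (x :: (A ++ B))
  | [], _, _ => Relation.ReflTransGen.refl
  | a :: A, B, h => by
    have h1 : Sim E (a :: (A ++ x :: B)) (a :: (x :: (A ++ B))) :=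
      sim_cons a (bubble A B fun c hc => h c (List.mem_cons_of_mem _ hc))
    refine simTrans h1 (Relation.ReflTransGen.single ?_)
    exact SwapRel.swap [] (A ++ B) a x (h a (List.mem_cons_self))

theorem pre_first_indep : ∀ (A : List (Fin n)) (Λ : Fin n → Fin n → ℕ) {x : Fin n}
    {B : List (Fin n)}, IsSink Λ x → x ∉ A → Admissible Λ (A ++ x :: B) →
    ∀ a ∈ A, edges Λ a x = 0
  | [], _, _, _, _, _, _, a, ha => by simp at ha
  | c :: A, Λ, x, B, hx, hxA, hadm, a, ha => by
    obtain ⟨hc, hrest⟩ := hadm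
    have hxc : ¬ x = c := fun h => hxA (by simp [h])
    rcases List.mem_cons.mp ha with rfl | ha'
    · simp [edges, hc x, hx a]
    · have hx' : IsSink (flipO c Λ) x := by
        intro y
        by_cases hyc : y = c
        · subst hyc; simpa [flipO, hxc] using hc x
        · simpa [flipO, hxc, hyc] using hx y
      have := pre_first_indep A (flipO c Λ) hx'
        (fun h => hxA (List.mem_cons_of_mem _ h)) hrest a ha'
      rwa [edges_flipO] at this

theorem exists_complement : ∀ (X : List (Fin n)) (Λ : Fin n → Fin n → ℕ) (Y : List (Fin n)),
    Admissible Λ X → Admissible Λ Y → (∀ c, X.count c ≤ Y.count c) →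
    ∃ W, Admissible (orientAfter Λ X) W ∧ Sim (edges Λ) Y (X ++ W)
  | [], _, Y, _, hY, _ => ⟨Y, hY, Relation.ReflTransGen.refl⟩
  | x :: X, Λ, Y, hX, hY, hcount => by
    obtain ⟨hx, hX'⟩ := hX
    have hxY : x ∈ Y := by
      have h1 := hcount x
      rw [List.count_cons_self] at h1
      exact List.count_pos_iff.mp (by omega)
    obtain ⟨A, B, rfl, hA⟩ := first_split hxY
    have hind : ∀ a ∈ A, edges Λ a x = 0 := pre_first_indep A Λ hx hA hY
    have hsim1 : Sim (edges Λ) (A ++ x :: B) (x :: (A ++ B)) := bubble A B hind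
    have hadm1 : Admissible Λ (x :: (A ++ B)) := adm_sim hsim1 hY
    obtain ⟨-, hAB⟩ := hadm1
    have hcount' : ∀ c, X.count c ≤ (A ++ B).count c := by
      intro c
      have h1 := hcount c
      by_cases hcx : c = x
      · subst hcx
        rw [List.count_cons_self] at h1
        simp only [List.count_append, List.count_cons_self] at h1
        simp only [List.count_append]
        omega
      · have hxc : ¬ x = c := fun h => hcx h.symm
        rw [List.count_cons_of_ne hxc] at h1
        simp only [List.count_append, List.count_cons_of_ne hxc] at h1
        simp only [List.count_append]
        omega
    obtain ⟨W, hWadm, hWsim⟩ := exists_complement X (flipO x Λ) (A ++ B) hX' hAB hcount'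
    rw [edges_flipO] at hWsim
    exact ⟨W, hWadm, simTrans hsim1 (sim_cons x hWsim)⟩

/-- Projection to the letters `a`, `b`. -/
def proj (a b : Fin n) (l : List (Fin n)) : List (Fin n) :=
  l.filter (fun c => decide (c = a ∨ c = b))

theorem filter_swap_of_not_both {α : Type} {p : α → Bool} {a b : α}
    (h : ¬ (p a = true ∧ p b = true)) (l : List α) :
    List.filter p (a :: b :: l) = List.filter p (b :: a :: l) := by
  by_cases ha : p a <;> by_cases hb : p b <;> simp_all [List.filter_cons]

theorem swapRel_proj {E : Fin n → Fin n → ℕ} (hsym : ∀ a b, E a b = E b a)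
    {u v : List (Fin n)} (h : SwapRel E u v) {c d : Fin n} (hcd : E c d ≠ 0) :
    proj c d u = proj c d v := by
  rcases h with ⟨l₁, l₂, a, b, hab⟩
  by_cases heq : a = b
  · subst heq; rfl
  have hnb : ¬ ((decide (a = c ∨ a = d) = true) ∧ (decide (b = c ∨ b = d) = true)) := by
    simp only [decide_eq_true_eq]
    rintro ⟨(rfl | rfl), (rfl | rfl)⟩
    · exact heq rfl
    · exact hcd hab
    · exact hcd (by rw [hsym]; exact hab)
    · exact heq rfl
  simp only [proj, List.filter_append]
  rw [filter_swap_of_not_both hnb]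

theorem sim_proj {E : Fin n → Fin n → ℕ} (hsym : ∀ a b, E a b = E b a)
    {u v : List (Fin n)} (h : Sim E u v) {c d : Fin n} (hcd : E c d ≠ 0) :
    proj c d u = proj c d v := by
  induction h with
  | refl => rfl
  | tail _ h₂ ih => rw [ih, swapRel_proj hsym h₂ hcd]

theorem sim_of_count_proj {E : Fin n → Fin n → ℕ} (hsym : ∀ a b, E a b = E b a) :
    ∀ (u v : List (Fin n)), (∀ c, u.count c = v.count c) →
    (∀ c d, E c d ≠ 0 → proj c d u = proj c d v) → Sim E u v
  | [], v, hc, _ => by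
    cases v with
    | nil => exact Relation.ReflTransGen.refl
    | cons c v =>
      have := hc c
      rw [List.count_cons_self] at this
      simp at this
  | x :: u, v, hc, hp => by
    have hxv : x ∈ v := by
      have h1 := hc x
      rw [List.count_cons_self] at h1
      exact List.count_pos_iff.mp (by omega)
    obtain ⟨A, B, rfl, hA⟩ := first_split hxv
    have hind : ∀ a ∈ A, E a x = 0 := by
      intro a haA
      by_contra hne
      have hax : ¬ a = x := fun h => hA (h ▸ haA)
      have hproj := hp a x hne
      have h1 : proj a x (x :: u) = x :: proj a x u := by
        simp [proj, List.filter_cons]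
      have h2 : proj a x (A ++ x :: B) =
          (A.filter (fun c => decide (c = a ∨ c = x))) ++ x :: proj a x B := by
        simp [proj, List.filter_append, List.filter_cons]
      rw [h1, h2] at hproj
      cases hfa : A.filter (fun c => decide (c = a ∨ c = x)) with
      | nil =>
        have : a ∈ A.filter (fun c => decide (c = a ∨ c = x)) :=
          List.mem_filter.mpr ⟨haA, by simp⟩
        rw [hfa] at this
        simp at this
      | cons e es =>
        rw [hfa] at hproj
        have he : e ∈ A.filter (fun c => decide (c = a ∨ c = x)) := by
          rw [hfa]; exact List.mem_cons_self
        obtain ⟨heA, hep⟩ := List.mem_filter.mp he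
        have hea : e = a := by
          rcases decide_eq_true_eq.mp hep with h | h
          · exact h
          · exact absurd (h ▸ heA) hA
        simp only [List.cons_append, List.cons.injEq] at hproj
        exact hax ((hproj.1.trans hea).symm)
    have hsim1 : Sim E (A ++ x :: B) (x :: (A ++ B)) := bubble A B hind
    have hcount' : ∀ c, u.count c = (A ++ B).count c := by
      intro c
      have h1 := hc c
      have h2 : (x :: (A ++ B)).count c = (A ++ x :: B).count c :=
        (sim_count (simSymm hsym hsim1) c)
      rw [← h2] at h1
      by_cases hcx : c = x
      · subst hcx
        rw [List.count_cons_self, List.count_cons_self] at h1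
        omega
      · rw [List.count_cons_of_ne (Ne.symm hcx), List.count_cons_of_ne (Ne.symm hcx)] at h1
        exact h1
    have hproj' : ∀ c d, E c d ≠ 0 → proj c d u = proj c d (A ++ B) := by
      intro c d hcd
      have h1 := hp c d hcd
      have h2 := sim_proj hsym hsim1 hcd
      rw [h2] at h1
      by_cases hx' : (x = c ∨ x = d)
      · simp only [proj, List.filter_cons, decide_eq_true_eq, if_pos hx'] at h1
        exact List.cons.inj h1 |>.2
      · simpa only [proj, List.filter_cons, decide_eq_true_eq, if_neg hx'] using h1
    have htail : Sim E u (A ++ B) := sim_of_count_proj hsym u (A ++ B) hcount' hproj'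
    exact simTrans (sim_cons x htail) (simSymm hsym hsim1)

theorem sim_cancel_left {E : Fin n → Fin n → ℕ} (hsym : ∀ a b, E a b = E b a)
    {p u v : List (Fin n)} (h : Sim E (p ++ u) (p ++ v)) : Sim E u v := by
  apply sim_of_count_proj hsym
  · intro c
    have := sim_count h c
    simp only [List.count_append] at this
    omega
  · intro c d hcd
    have := sim_proj hsym h hcd
    simp only [proj, List.filter_append] at this
    exact List.append_cancel_left this

theorem segs_count : ∀ (segs : List (List (Fin n))), (∀ seg ∈ segs, seg.Nodup) →
    (∀ i, i < segs.length → suppOf (segs.getD i []) = suppOf ((segs.drop i).flatten)) →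
    ∀ (i : ℕ) (v : Fin n), v ∈ suppOf (segs.getD i []) ↔ i < segs.flatten.count v
  | [], _, _, i, v => by simp [suppOf, List.getD_nil]
  | seg :: rest, hnd, hsupp, i, v => by
    have h0 : suppOf seg = suppOf ((seg :: rest).flatten) := by
      have := hsupp 0 (by simp)
      simpa using this
    cases i with
    | zero =>
      simp only [List.getD_cons_zero]
      rw [h0]
      simp only [suppOf, Set.mem_setOf_eq]
      exact ⟨fun h => List.count_pos_iff.mpr h, fun h => List.count_pos_iff.mp h⟩
    | succ i =>
      have ih := segs_count rest (fun s hs => hnd s (List.mem_cons_of_mem _ hs))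
        (fun j hj => by
          have := hsupp (j + 1) (by simpa using Nat.succ_lt_succ hj)
          simpa using this) i v
      simp only [List.getD_cons_succ]
      rw [ih]
      by_cases hv : v ∈ seg
      · have hle : seg.count v ≤ 1 := List.nodup_iff_count_le_one.mp (hnd seg (List.mem_cons_self)) v
        have hpos : 0 < seg.count v := List.count_pos_iff.mpr hv
        have h1 : seg.count v = 1 := by omega
        simp only [List.flatten_cons, List.count_append, h1]
        omega
      · have h1 : seg.count v = 0 := by
          rw [List.count_eq_zero]; exact hv
        have h2 : rest.flatten.count v = 0 := by
          rw [List.count_eq_zero]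
          intro hmem
          apply hv
          have hmem' : v ∈ suppOf ((seg :: rest).flatten) := by
            simp only [suppOf, Set.mem_setOf_eq, List.flatten_cons, List.mem_append]
            exact Or.inr hmem
          rw [← h0] at hmem'
          exact hmem'
        simp only [List.flatten_cons, List.count_append, h1, h2]
        omega

theorem segments_count {Λ : Fin n → Fin n → ℕ} {S : List (Fin n)}
    {segs : List (List (Fin n))} (h : Segments Λ S segs) :
    ∀ (i : ℕ) (v : Fin n), v ∈ suppOf (segs.getD i []) ↔ i < S.count v := by
  obtain ⟨_, hsim, hseg, hsupp⟩ := h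
  intro i v
  rw [segs_count segs (fun s hs => (hseg s hs).2) hsupp i v, sim_count hsim v]

theorem eq_min_of_iff {m a b : ℕ} (h : ∀ i, i < m ↔ (i < a ∧ i < b)) : m = min a b := by
  have h1 := h m; have h2 := h a; have h3 := h b; omega

theorem eq_max_of_iff {j a b : ℕ} (h : ∀ i, i < j ↔ (i < a ∨ i < b)) : j = max a b := by
  have h1 := h j; have h2 := h a; have h3 := h b; omega

theorem orientAfter_pair_mem : ∀ (P : List (Fin n)) (Λ : Fin n → Fin n → ℕ) (a b : Fin n),
    orientAfter Λ P a b = Λ a b ∨ orientAfter Λ P a b = Λ b a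
  | [], _, _, _ => Or.inl rfl
  | x :: P, Λ, a, b => by
    have h := orientAfter_pair_mem P (flipO x Λ) a b
    simp only [orientAfter]
    rcases h with h | h <;> rw [h] <;> simp only [flipO] <;> split <;> simp

theorem orientAfter_not_mem : ∀ (P : List (Fin n)) (Λ : Fin n → Fin n → ℕ) {a b : Fin n},
    a ∉ P → b ∉ P → orientAfter Λ P a b = Λ a b
  | [], _, _, _, _, _ => rfl
  | x :: P, Λ, a, b, ha, hb => by
    have hax : ¬ a = x := fun h => ha (by simp [h])
    have hbx : ¬ b = x := fun h => hb (by simp [h])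
    simp only [orientAfter]
    rw [orientAfter_not_mem P (flipO x Λ) (fun h => ha (List.mem_cons_of_mem _ h))
      (fun h => hb (List.mem_cons_of_mem _ h))]
    simp [flipO, hax, hbx]

theorem adm_agree : ∀ (Q : List (Fin n)) (Λ₁ Λ₂ : Fin n → Fin n → ℕ),
    (∀ a b, (a ∈ Q ∨ b ∈ Q) → Λ₁ a b = Λ₂ a b) → Admissible Λ₁ Q → Admissible Λ₂ Q
  | [], _, _, _, _ => trivial
  | x :: Q, Λ₁, Λ₂, hag, h => by
    obtain ⟨hx, hQ⟩ := h
    refine ⟨fun y => ?_, adm_agree Q (flipO x Λ₁) (flipO x Λ₂) ?_ hQ⟩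
    · rw [← hag x y (Or.inl (List.mem_cons_self))]
      exact hx y
    · intro a b hab
      have hab' : a ∈ x :: Q ∨ b ∈ x :: Q := by
        rcases hab with h' | h'
        · exact Or.inl (List.mem_cons_of_mem _ h')
        · exact Or.inr (List.mem_cons_of_mem _ h')
      simp only [flipO]
      split
      · exact hag b a hab'.symm
      · exact hag a b hab'

theorem sink_edge_zero {Λ : Fin n → Fin n → ℕ} {U : List (Fin n)} (hU : Admissible Λ U)
    {a b : Fin n} (ha : a ∈ U) (hb : b ∉ U) : Λ a b = 0 := by
  obtain ⟨P, Q, rfl, hP⟩ := first_split ha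
  have hsink : IsSink (orientAfter Λ P) a := ((adm_append P Λ _).mp hU).2.1
  have h1 := hsink b
  rwa [orientAfter_not_mem P Λ hP
    (fun h => hb (List.mem_append.mpr (Or.inl h)))] at h1

theorem orient_agree_disj {Λ : Fin n → Fin n → ℕ} {U V : List (Fin n)}
    (hU : Admissible Λ U) (hV : Admissible Λ V)
    (hdisj : ∀ c, c ∈ U → c ∈ V → False) :
    ∀ a b, (a ∈ V ∨ b ∈ V) → orientAfter Λ U a b = Λ a b := by
  intro a b hab
  by_cases haU : a ∈ U
  · have hbV : b ∈ V := by
      rcases hab with h | h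
      · exact absurd (hdisj a haU h) not_false
      · exact h
    have h1 : Λ a b = 0 := sink_edge_zero hU haU (fun h => hdisj b h hbV)
    have h2 : Λ b a = 0 := sink_edge_zero hV hbV (fun h => hdisj a haU h)
    rcases orientAfter_pair_mem U Λ a b with h | h <;> rw [h] <;> omega
  · by_cases hbU : b ∈ U
    · have haV : a ∈ V := by
        rcases hab with h | h
        · exact h
        · exact absurd (hdisj b hbU h) not_false
      have h1 : Λ b a = 0 := sink_edge_zero hU hbU (fun h => hdisj a h haV)
      have h2 : Λ a b = 0 := sink_edge_zero hV haV (fun h => hdisj b hbU h)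
      rcases orientAfter_pair_mem U Λ a b with h | h <;> rw [h] <;> omega
    · exact orientAfter_not_mem U Λ haU hbU

theorem single_pass {E : Fin n → Fin n → ℕ} {a : Fin n} :
    ∀ (v : List (Fin n)), (∀ b ∈ v, E a b = 0) → Sim E (a :: v) (v ++ [a])
  | [], _ => Relation.ReflTransGen.refl
  | b :: v, h => by
    have h1 : SwapRel E ([] ++ a :: b :: v) ([] ++ b :: a :: v) :=
      SwapRel.swap [] v a b (h b (List.mem_cons_self))
    refine Relation.ReflTransGen.head h1 ?_
    exact sim_cons b (single_pass v fun c hc => h c (List.mem_cons_of_mem _ hc))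

theorem sim_block_swap {E : Fin n → Fin n → ℕ} :
    ∀ (u v : List (Fin n)), (∀ a ∈ u, ∀ b ∈ v, E a b = 0) → Sim E (u ++ v) (v ++ u)
  | [], v, _ => by simpa using simRefl v
  | a :: u, v, h => by
    have h1 : Sim E (u ++ v) (v ++ u) :=
      sim_block_swap u v (fun a' ha' => h a' (List.mem_cons_of_mem _ ha'))
    have h2 : Sim E (a :: (u ++ v)) (a :: (v ++ u)) := sim_cons a h1
    have h3 : Sim E (a :: v) (v ++ [a]) :=
      single_pass v (fun b hb => h a (List.mem_cons_self) b hb)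
    have h4 : Sim E ((a :: v) ++ u) ((v ++ [a]) ++ u) := sim_append_right u h3
    exact simTrans h2 (by simpa [List.append_assoc] using h4)

theorem list_eq_nil_of_count {l : List (Fin n)} (h : ∀ c, l.count c = 0) : l = [] := by
  cases l with
  | nil => rfl
  | cons c l =>
    have := h c
    rw [List.count_cons_self] at this
    omega

end MeetJoinAux

theorem meet_join_theorem
    (n : ℕ) (hn : 2 ≤ n) (Λ : Fin n → Fin n → ℕ)
    (hloop : ∀ a, Λ a a = 0)
    (hconn : ∀ a b : Fin n, Relation.ReflTransGen (fun u v => edges Λ u v ≠ 0) a b)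
    (hacyc : ∀ a : Fin n, ¬ Relation.TransGen (fun u v => Λ u v ≠ 0) a a)
    (S T : List (Fin n)) (hS : Admissible Λ S) (hT : Admissible Λ T)
    (hSne : S ≠ []) (hTne : T ≠ []) :
    ∀ MT : List (Fin n), IsMeet Λ S T MT → Admissible Λ MT →
      ∃ U V : List (Fin n),
        Admissible (orientAfter Λ MT) U ∧ Admissible (orientAfter Λ MT) V ∧
        Sim (edges Λ) S (MT ++ U) ∧ Sim (edges Λ) T (MT ++ V) ∧
        (∀ U', Admissible (orientAfter Λ MT) U' → Sim (edges Λ) S (MT ++ U') →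
          Sim (edges Λ) U U') ∧
        (∀ V', Admissible (orientAfter Λ MT) V' → Sim (edges Λ) T (MT ++ V') →
          Sim (edges Λ) V V') ∧
        suppOf U ∩ suppOf V = ∅ ∧
        Admissible (orientAfter Λ MT) (U ++ V) ∧ Admissible (orientAfter Λ MT) (V ++ U) ∧
        Sim (edges Λ) (U ++ V) (V ++ U) ∧
        ∀ J, IsJoin Λ S T J →
          Sim (edges Λ) J (MT ++ (U ++ V)) ∧ Sim (edges Λ) J (S ++ V) ∧
          Sim (edges Λ) J (T ++ U) := by
  intro MT hmeet hMTadm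
  have hsym : ∀ a b, edges Λ a b = edges Λ b a := edges_symm Λ
  obtain ⟨CS, CT, CM, hCS, hCT, hCM, hMsupp⟩ := hmeet
  have cS := segments_count hCS
  have cT := segments_count hCT
  have cM := segments_count hCM
  have hMmin : ∀ v, MT.count v = min (S.count v) (T.count v) := by
    intro v
    apply eq_min_of_iff
    intro i
    have h1 := hMsupp i
    constructor
    · intro hi
      have hv : v ∈ suppOf (CM.getD i []) := (cM i v).mpr hi
      rw [h1] at hv
      exact ⟨(cS i v).mp hv.1, (cT i v).mp hv.2⟩
    · rintro ⟨h2, h3⟩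
      have hv : v ∈ suppOf (CS.getD i []) ∩ suppOf (CT.getD i []) :=
        ⟨(cS i v).mpr h2, (cT i v).mpr h3⟩
      rw [← h1] at hv
      exact (cM i v).mp hv
  obtain ⟨U, hUadm, hUsim⟩ := exists_complement MT Λ S hMTadm hS
    (fun c => by rw [hMmin]; exact Nat.min_le_left _ _)
  obtain ⟨V, hVadm, hVsim⟩ := exists_complement MT Λ T hMTadm hT
    (fun c => by rw [hMmin]; exact Nat.min_le_right _ _)
  have hcU : ∀ c, S.count c = MT.count c + U.count c := by
    intro c
    have h := sim_count hUsim c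
    simpa [List.count_append] using h
  have hcV : ∀ c, T.count c = MT.count c + V.count c := by
    intro c
    have h := sim_count hVsim c
    simpa [List.count_append] using h
  have hdisj : ∀ c, c ∈ U → c ∈ V → False := by
    intro c h1 h2
    have p1 : 0 < U.count c := List.count_pos_iff.mpr h1
    have p2 : 0 < V.count c := List.count_pos_iff.mpr h2
    have := hMmin c; have := hcU c; have := hcV c
    omega
  have hXedge : ∀ a ∈ U, ∀ b ∈ V, edges Λ a b = 0 := by
    intro a ha b hb
    have e1 : orientAfter Λ MT a b = 0 := sink_edge_zero hUadm ha (fun h => hdisj b h hb)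
    have e2 : orientAfter Λ MT b a = 0 := sink_edge_zero hVadm hb (fun h => hdisj a ha h)
    have h3 : edges (orientAfter Λ MT) a b = 0 := by simp [edges, e1, e2]
    rwa [edges_orientAfter] at h3
  have hUVadm : Admissible (orientAfter Λ MT) (U ++ V) := by
    rw [adm_append]
    refine ⟨hUadm, adm_agree V _ _ (fun a b hab => (orient_agree_disj hUadm hVadm hdisj a b hab).symm) hVadm⟩
  have hVUadm : Admissible (orientAfter Λ MT) (V ++ U) := by
    rw [adm_append]
    refine ⟨hVadm, adm_agree U _ _
      (fun a b hab => (orient_agree_disj hVadm hUadm (fun c h1 h2 => hdisj c h2 h1) a b hab).symm) hUadm⟩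
  have hUVsim : Sim (edges Λ) (U ++ V) (V ++ U) := sim_block_swap U V hXedge
  refine ⟨U, V, hUadm, hVadm, hUsim, hVsim, ?_, ?_, ?_, hUVadm, hVUadm, hUVsim, ?_⟩
  · intro U' _ hsim'
    exact sim_cancel_left hsym (simTrans (simSymm hsym hUsim) hsim')
  · intro V' _ hsim'
    exact sim_cancel_left hsym (simTrans (simSymm hsym hVsim) hsim')
  · rw [Set.eq_empty_iff_forall_notMem]
    intro c hc
    exact hdisj c hc.1 hc.2
  · intro J hjoin
    obtain ⟨CS', CT', CJ, hCS', hCT', hCJ, hJsupp⟩ := hjoin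
    have cS' := segments_count hCS'
    have cT' := segments_count hCT'
    have cJ := segments_count hCJ
    have hJmax : ∀ v, J.count v = max (S.count v) (T.count v) := by
      intro v
      apply eq_max_of_iff
      intro i
      have h1 := hJsupp i
      constructor
      · intro hi
        have hv : v ∈ suppOf (CJ.getD i []) := (cJ i v).mpr hi
        rw [h1] at hv
        rcases hv with hv | hv
        · exact Or.inl ((cS' i v).mp hv)
        · exact Or.inr ((cT' i v).mp hv)
      · intro hv
        have hv' : v ∈ suppOf (CS'.getD i []) ∪ suppOf (CT'.getD i []) := by
          rcases hv with hv | hv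
          · exact Or.inl ((cS' i v).mpr hv)
          · exact Or.inr ((cT' i v).mpr hv)
        rw [← h1] at hv'
        exact (cJ i v).mp hv'
    have hJadm : Admissible Λ J := by
      obtain ⟨hadm, hsimJ, -, -⟩ := hCJ
      exact adm_sim (simSymm hsym hsimJ) hadm
    have hXadm : Admissible Λ (MT ++ (U ++ V)) := (adm_append _ _ _).mpr ⟨hMTadm, hUVadm⟩
    have hXcount : ∀ c, (MT ++ (U ++ V)).count c ≤ J.count c := by
      intro c
      simp only [List.count_append]
      have := hMmin c; have := hcU c; have := hcV c; have := hJmax c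
      omega
    obtain ⟨W, hWadm, hWsim⟩ := exists_complement (MT ++ (U ++ V)) Λ J hXadm hJadm hXcount
    have hWnil : W = [] := by
      apply list_eq_nil_of_count
      intro c
      have h := sim_count hWsim c
      simp only [List.count_append] at h
      have := hMmin c; have := hcU c; have := hcV c; have := hJmax c
      omega
    rw [hWnil, List.append_nil] at hWsim
    refine ⟨hWsim, ?_, ?_⟩
    · have h1 : Sim (edges Λ) (S ++ V) ((MT ++ U) ++ V) := sim_append_right V hUsim
      rw [List.append_assoc] at h1
      exact simTrans hWsim (simSymm hsym h1)
    · have h0 : Sim (edges Λ) (MT ++ (U ++ V)) (MT ++ (V ++ U)) := sim_append_left MT hUVsim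
      have h1 : Sim (edges Λ) (T ++ U) ((MT ++ V) ++ U) := sim_append_right U hVsim
      rw [List.append_assoc] at h1
      exact simTrans (simTrans hWsim h0) (simSymm hsym h1)


end KP
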